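/- Modulo 9, the cube of the eta-quotient series satisfies ((q;q)_∞³/(q³;q³)_∞)³ ≡ 1 (mod 9) as formal power series with integer coefficients. -/

import Mathlib

open PowerSeries Finset

/-- Coefficientwise infinite product of power series over `ℤ`: valid whenever the
`n`-th factor does not affect coefficients below `q^{n+1}`. -/
noncomputable def infProd (f : ℕ → PowerSeries ℤ) : PowerSeries ℤ :=
  PowerSeries.mk fun d => PowerSeries.coeff (R := ℤ) d (∏ n ∈ Finset.range (d + 1), f n)

/-- `(q;q)_∞ = ∏_{n≥1}(1-q^n)` over `ℤ`. -/
noncomputable def qProdInf : PowerSeries ℤ :=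
  infProd fun n => 1 - (X : PowerSeries ℤ) ^ (n + 1)

/-- `(q³;q³)_∞ = ∏_{n≥1}(1-q^{3n})` over `ℤ`. -/
noncomputable def q3ProdInf : PowerSeries ℤ :=
  infProd fun n => 1 - (X : PowerSeries ℤ) ^ (3 * (n + 1))

section aux

lemma agree_mul {R : Type*} [CommRing R] {d : ℕ} {f g f' g' : PowerSeries R}
    (hf : ∀ e ≤ d, coeff (R := R) e f = coeff (R := R) e f') (hg : ∀ e ≤ d, coeff (R := R) e g = coeff (R := R) e g') :
    ∀ e ≤ d, coeff (R := R) e (f * g) = coeff (R := R) e (f' * g') := by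
  intro e he
  rw [coeff_mul, coeff_mul]
  refine Finset.sum_congr rfl fun p hp => ?_
  have hpe := Finset.HasAntidiagonal.mem_antidiagonal.mp hp
  rw [hf p.1 (le_trans (le_trans (Nat.le_add_right _ _) hpe.le) he),
    hg p.2 (le_trans (le_trans (Nat.le_add_left _ _) hpe.le) he)]

lemma agree_pow {R : Type*} [CommRing R] {d : ℕ} {f f' : PowerSeries R}
    (hf : ∀ e ≤ d, coeff (R := R) e f = coeff (R := R) e f') (k : ℕ) :
    ∀ e ≤ d, coeff (R := R) e (f ^ k) = coeff (R := R) e (f' ^ k) := by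
  induction k with
  | zero => simp
  | succ k ih =>
    rw [pow_succ, pow_succ]
    exact agree_mul ih hf

lemma coeff_prod_stable (a : ℕ → ℕ) (ha : ∀ n, n < a n) (e : ℕ) :
    ∀ N, e < N →
      coeff (R := ℤ) e (∏ n ∈ range N, (1 - X ^ a n)) = coeff (R := ℤ) e (∏ n ∈ range (e + 1), (1 - X ^ a n)) := by
  intro N
  induction N with
  | zero => omega
  | succ N ih =>
    intro hN
    rcases Nat.lt_or_ge e N with h | h
    · rw [Finset.prod_range_succ, mul_sub, mul_one, map_sub, coeff_mul_X_pow',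
        if_neg (by have := ha N; omega), sub_zero, ih h]
    · have : N = e := by omega
      subst this; rfl

lemma agree_qProdInf (d : ℕ) :
    ∀ e ≤ d, coeff (R := ℤ) e qProdInf = coeff (R := ℤ) e (∏ n ∈ range (d + 1), (1 - X ^ (n + 1))) := by
  intro e he
  rw [qProdInf, infProd, coeff_mk,
    coeff_prod_stable (fun n => n + 1) (fun n => Nat.lt_succ_self n) e (d + 1) (by omega)]

lemma agree_q3ProdInf (d : ℕ) :
    ∀ e ≤ d, coeff (R := ℤ) e q3ProdInf = coeff (R := ℤ) e (∏ n ∈ range (d + 1), (1 - X ^ (3 * (n + 1)))) := by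
  intro e he
  rw [q3ProdInf, infProd, coeff_mk,
    coeff_prod_stable (fun n => 3 * (n + 1)) (fun n => show n < 3 * (n + 1) by omega) e (d + 1) (by omega)]

lemma cube_identity {R : Type*} [CommRing R] (h9 : (9 : R) = 0) (u : R) :
    (1 - u) ^ 9 = (1 - u ^ 3) ^ 3 := by
  linear_combination (-u + 4 * u ^ 2 - 9 * u ^ 3 + 14 * u ^ 4 - 14 * u ^ 5 + 9 * u ^ 6
    - 4 * u ^ 7 + u ^ 8) * h9

lemma nine_eq_zero : (9 : PowerSeries (ZMod 9)) = 0 := by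
  rw [← map_ofNat (PowerSeries.C (R := ZMod 9)) 9, show (9 : ZMod 9) = 0 by decide, map_zero]

end aux

lemma factor_eq (n : ℕ) :
    ((1 : PowerSeries (ZMod 9)) - X ^ (n + 1)) ^ 9 = (1 - X ^ (3 * (n + 1))) ^ 3 := by
  rw [cube_identity nine_eq_zero ((X : PowerSeries (ZMod 9)) ^ (n + 1)), ← pow_mul,
    Nat.mul_comm]

lemma map_nine : PowerSeries.map (Int.castRingHom (ZMod 9)) (qProdInf ^ 9)
    = PowerSeries.map (Int.castRingHom (ZMod 9)) (q3ProdInf ^ 3) := by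
  ext d
  rw [PowerSeries.coeff_map, PowerSeries.coeff_map,
    agree_pow (agree_qProdInf d) 9 d le_rfl,
    agree_pow (agree_q3ProdInf d) 3 d le_rfl,
    ← PowerSeries.coeff_map, ← PowerSeries.coeff_map]
  congr 1
  rw [map_pow, map_pow, map_prod, map_prod, ← Finset.prod_pow, ← Finset.prod_pow]
  refine Finset.prod_congr rfl fun n _ => ?_
  simp only [map_sub, map_one, map_pow, PowerSeries.map_X]
  exact factor_eq n

lemma q3_unit : q3ProdInf * Ring.inverse q3ProdInf = 1 := by
  apply Ring.mul_inverse_cancel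
  rw [PowerSeries.isUnit_iff_constantCoeff]
  have h := agree_q3ProdInf 0 0 le_rfl
  simp only [coeff_zero_eq_constantCoeff] at h
  rw [h]
  simp

/-- `((q;q)_∞³/(q³;q³)_∞)³ ≡ 1 (mod 9)`: every coefficient of the cube of the
eta-quotient `(q;q)_∞³ · (q³;q³)_∞⁻¹` is congruent mod 9 to the corresponding
coefficient of `1`. (`(q³;q³)_∞` has constant term `1`, hence is a unit, and
`Ring.inverse` is its genuine inverse.) -/
theorem eta_quotient_cube_mod_nine :
    ∀ d : ℕ, PowerSeries.coeff (R := ℤ) d ((qProdInf ^ 3 * Ring.inverse q3ProdInf) ^ 3)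
      ≡ PowerSeries.coeff (R := ℤ) d 1 [ZMOD 9] := by
  intro d
  refine (ZMod.intCast_eq_intCast_iff _ _ 9).mp ?_
  set φ := Int.castRingHom (ZMod 9) with hφ
  have key : PowerSeries.map φ ((qProdInf ^ 3 * Ring.inverse q3ProdInf) ^ 3)
      = PowerSeries.map φ 1 := by
    have hu : PowerSeries.map φ q3ProdInf * PowerSeries.map φ (Ring.inverse q3ProdInf) = 1 := by
      rw [← map_mul, q3_unit, map_one]
    rw [map_one, map_pow, map_mul, map_pow]
    calc (PowerSeries.map φ qProdInf ^ 3 * PowerSeries.map φ (Ring.inverse q3ProdInf)) ^ 3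
        = (PowerSeries.map φ qProdInf) ^ 9
            * (PowerSeries.map φ (Ring.inverse q3ProdInf)) ^ 3 := by ring
      _ = (PowerSeries.map φ q3ProdInf) ^ 3
            * (PowerSeries.map φ (Ring.inverse q3ProdInf)) ^ 3 := by
          rw [← map_pow, map_nine, map_pow]
      _ = (PowerSeries.map φ q3ProdInf * PowerSeries.map φ (Ring.inverse q3ProdInf)) ^ 3 := by
          ring
      _ = 1 := by rw [hu, one_pow]
  have h := congrArg (PowerSeries.coeff (R := ZMod 9) d) key
  rw [PowerSeries.coeff_map, PowerSeries.coeff_map] at h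
  exact h
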